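/- If M = ∅, then cl(conv(P^B ∖ G_D^C)) = P^B. -/

import Mathlib

open Set Pointwise

noncomputable section

variable {n : ℕ} {ι : Type*} [Fintype ι]

/-- Recession cone of a set `A`. -/
def recc (A : Set (Fin n → ℝ)) : Set (Fin n → ℝ) :=
  {d | ∀ a ∈ A, ∀ t : ℝ, 0 ≤ t → a + t • d ∈ A}

/-- The translated simplicial cone `P^B = {x̄ + Σ_j x_j r^j : x_j ≥ 0}`. -/
def PBset (xb : Fin n → ℝ) (r : ι → Fin n → ℝ) : Set (Fin n → ℝ) :=
  {x | ∃ c : ι → ℝ, (∀ j, 0 ≤ c j) ∧ x = xb + ∑ j, c j • r j}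

/-- The recession cone of `P^B`, i.e. `{Σ_j t_j r^j : t_j ≥ 0}`. -/
def reccPBset (r : ι → Fin n → ℝ) : Set (Fin n → ℝ) :=
  {x | ∃ t : ι → ℝ, (∀ j, 0 ≤ t j) ∧ x = ∑ j, t j • r j}

/-- `λ⁻ = inf {λ ≥ 0 : x̄ + λ d ∈ C}` (`+∞` if the halfline misses `C`). -/
noncomputable def lamM (xb d : Fin n → ℝ) (C : Set (Fin n → ℝ)) : EReal :=
  sInf ((fun l : ℝ => (l : EReal)) '' {l : ℝ | 0 ≤ l ∧ xb + l • d ∈ C})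

/-- `λ⁺ = sup {λ ≥ 0 : x̄ + λ d ∈ C}` (`−∞` if the halfline misses `C`). -/
noncomputable def lamP (xb d : Fin n → ℝ) (C : Set (Fin n → ℝ)) : EReal :=
  sSup ((fun l : ℝ => (l : EReal)) '' {l : ℝ | 0 ≤ l ∧ xb + l • d ∈ C})

/-- `N₀`: indices whose halfline misses `C`. -/
def N0set (xb : Fin n → ℝ) (r : ι → Fin n → ℝ) (C : Set (Fin n → ℝ)) : Set ι :=
  {j | ∀ l : ℝ, 0 ≤ l → xb + l • r j ∉ C}

/-- `N₁`: indices with `0 < λ⁻ < +∞` and `λ⁺ = +∞`. -/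
def N1set (xb : Fin n → ℝ) (r : ι → Fin n → ℝ) (C : Set (Fin n → ℝ)) : Set ι :=
  {j | 0 < lamM xb (r j) C ∧ lamM xb (r j) C < ⊤ ∧ lamP xb (r j) C = ⊤}

/-- `N₂`: indices with `0 < λ⁻ < +∞` and `λ⁻ < λ⁺ < +∞`. -/
def N2set (xb : Fin n → ℝ) (r : ι → Fin n → ℝ) (C : Set (Fin n → ℝ)) : Set ι :=
  {j | 0 < lamM xb (r j) C ∧ lamM xb (r j) C < ⊤ ∧
    lamM xb (r j) C < lamP xb (r j) C ∧ lamP xb (r j) C < ⊤}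

/-- `G_D = {x̄} + conv(⋃_{j∈D} {λ r^j : λ > λ⁻_j})`. -/
def GDset (xb : Fin n → ℝ) (r : ι → Fin n → ℝ) (C : Set (Fin n → ℝ)) (D : Finset ι) :
    Set (Fin n → ℝ) :=
  {xb} + convexHull ℝ (⋃ j ∈ (D : Set ι),
    {y : Fin n → ℝ | ∃ l : ℝ, lamM xb (r j) C < (l : EReal) ∧ y = l • r j})

/-- `G_D^C = G_D + recc(C)`. -/
def GDCset (xb : Fin n → ℝ) (r : ι → Fin n → ℝ) (C : Set (Fin n → ℝ)) (D : Finset ι) :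
    Set (Fin n → ℝ) :=
  GDset xb r C D + recc C

/-- `γ_{ij} = sup {γ ≥ 0 : λ⁻_i r^i + γ r^j ∈ recc(G_D^C)}` (`+∞` if unbounded,
`−∞ = sSup ∅` if the set is empty). -/
noncomputable def gam (xb : Fin n → ℝ) (r : ι → Fin n → ℝ) (C : Set (Fin n → ℝ))
    (D : Finset ι) (i j : ι) : EReal :=
  sSup ((fun g : ℝ => (g : EReal)) ''
    {g : ℝ | 0 ≤ g ∧ (lamM xb (r i) C).toReal • r i + g • r j ∈ recc (GDCset xb r C D)})

/-- `M = {i ∈ D : γ_{ij} > 0 for all j ∈ N∖D}`. -/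
def Mset (xb : Fin n → ℝ) (r : ι → Fin n → ℝ) (C : Set (Fin n → ℝ)) (D : Finset ι) :
    Set ι :=
  {i | i ∈ D ∧ ∀ j, j ∉ D → 0 < gam xb r C D i j}

/-- `ε_j(S) = min_{i∈S} γ_{ij}` for `S ≠ ∅`, and `+∞` for `S = ∅` (via `sInf ∅ = ⊤`). -/
noncomputable def eps (xb : Fin n → ℝ) (r : ι → Fin n → ℝ) (C : Set (Fin n → ℝ))
    (D : Finset ι) (S : Finset ι) (j : ι) : EReal :=
  sInf ((fun i => gam xb r C D i j) '' (S : Set ι))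

/-! ### Auxiliary lemmas -/

section Aux

variable [DecidableEq ι] {xb : Fin n → ℝ} {r : ι → Fin n → ℝ} {C : Set (Fin n → ℝ)} {D : Finset ι}

lemma recc_smul {A : Set (Fin n → ℝ)} {d : Fin n → ℝ} (hd : d ∈ recc A) {s : ℝ}
    (hs : 0 ≤ s) : s • d ∈ recc A := by
  intro a ha t ht
  have := hd a ha (t * s) (mul_nonneg ht hs)
  simpa [smul_smul] using this

lemma recc_add {A : Set (Fin n → ℝ)} {d₁ d₂ : Fin n → ℝ} (h₁ : d₁ ∈ recc A)
    (h₂ : d₂ ∈ recc A) : d₁ + d₂ ∈ recc A := by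
  intro a ha t ht
  have := h₂ _ (h₁ a ha t ht) t ht
  simpa [smul_add, add_assoc] using this

lemma recc_add_left {A B : Set (Fin n → ℝ)} {d : Fin n → ℝ} (hd : d ∈ recc A) :
    d ∈ recc (A + B) := by
  intro a ha t ht
  rw [Set.mem_add] at ha
  obtain ⟨x, hx, y, hy, hxy⟩ := ha
  exact Set.mem_add.2 ⟨x + t • d, hd x hx t ht, y, hy, by rw [← hxy]; abel⟩

lemma recc_add_recc {B Cs : Set (Fin n → ℝ)} {d : Fin n → ℝ} (hd : d ∈ recc Cs) :
    d ∈ recc (B + recc Cs) := by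
  intro a ha t ht
  rw [Set.mem_add] at ha
  obtain ⟨x, hx, y, hy, hxy⟩ := ha
  exact Set.mem_add.2 ⟨x, hx, y + t • d, recc_add hy (recc_smul hd ht), by rw [← hxy]; abel⟩

/-- For `i ∈ D` the direction `r i` is in the recession cone of `G_D`. -/
lemma ri_recc_GD (L : ι → ℝ) (hL : ∀ k ∈ D, lamM xb (r k) C = (L k : EReal))
    (hLpos : ∀ k ∈ D, 0 < L k) {i : ι} (hi : i ∈ D) :
    r i ∈ recc (GDset xb r C D) := by
  classical
  intro a ha t ht
  set Q : Set (Fin n → ℝ) := ⋃ j ∈ (D : Set ι),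
    {y : Fin n → ℝ | ∃ l : ℝ, lamM xb (r j) C < (l : EReal) ∧ y = l • r j} with hQ
  have hamem : a ∈ {xb} + convexHull ℝ Q := ha
  rw [Set.mem_add] at hamem
  obtain ⟨x, hx, h, hh, hxa⟩ := hamem
  rw [Set.mem_singleton_iff] at hx
  rcases eq_or_lt_of_le ht with rfl | ht'
  · simpa using ha
  have hLi : 0 < L i := hLpos i hi
  set ε : ℝ := min (1/2) (t / (2 * L i)) with hε
  have hε0 : 0 < ε := lt_min (by norm_num) (div_pos ht' (by positivity))
  have hε1 : ε ≤ 1/2 := min_le_left _ _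
  have h1ε : 0 < 1 - ε := by linarith
  have hεt : ε ≤ t / (2 * L i) := min_le_right _ _
  have hLt : L i < t / ε := by
    rw [lt_div_iff₀ hε0]
    have : ε * (2 * L i) ≤ t := by
      rw [← le_div_iff₀ (by positivity)]; exact hεt
    nlinarith
  have hQi : (t / ε) • r i ∈ Q := by
    rw [hQ]
    refine Set.mem_iUnion₂.2 ⟨i, hi, ⟨t / ε, ?_, rfl⟩⟩
    rw [hL i hi]
    exact_mod_cast hLt
  have hinv1 : (1 : ℝ) ≤ (1 - ε)⁻¹ := one_le_inv_iff₀.2 ⟨h1ε, by linarith⟩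
  have hscale : (1 - ε)⁻¹ • h ∈ convexHull ℝ Q := by
    have hsub : (1 - ε)⁻¹ • Q ⊆ Q := by
      rintro y ⟨q, hq, rfl⟩
      rw [hQ] at hq ⊢
      obtain ⟨k, hk, l, hl, rfl⟩ := Set.mem_iUnion₂.1 hq
      have hlk : L k < l := by
        have h2 := hl; rw [hL k hk] at h2; exact_mod_cast h2
      have hlpos : 0 < l := lt_trans (hLpos k hk) hlk
      refine Set.mem_iUnion₂.2 ⟨k, hk, ⟨(1 - ε)⁻¹ * l, ?_, by simp [smul_smul]⟩⟩
      refine lt_of_lt_of_le hl ?_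
      exact_mod_cast (by nlinarith : l ≤ (1 - ε)⁻¹ * l)
    have h1 : (1 - ε)⁻¹ • h ∈ (1 - ε)⁻¹ • convexHull ℝ Q := smul_mem_smul_set hh
    rw [← convexHull_smul] at h1
    exact convexHull_mono hsub h1
  have hcomb := (convex_convexHull ℝ Q) hscale (subset_convexHull ℝ Q hQi)
    (by linarith : (0:ℝ) ≤ 1 - ε) hε0.le (by ring)
  have heq : (1 - ε) • ((1 - ε)⁻¹ • h) + ε • ((t / ε) • r i) = h + t • r i := by
    rw [smul_smul, smul_smul, mul_inv_cancel₀ h1ε.ne', one_smul,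
      mul_div_cancel₀ _ hε0.ne']
  rw [heq] at hcomb
  exact Set.mem_add.2 ⟨xb, Set.mem_singleton _, h + t • r i, hcomb, by rw [← hxa, hx]; abel⟩

/-- Master decomposition lemma: any point of `P^B` (given in coordinates) lying in
`G_D^C` admits a structured decomposition of its coordinates. -/
lemma master (hr : LinearIndependent ℝ r) (hrecc : recc C ⊆ reccPBset r)
    (L : ι → ℝ) (hL : ∀ k ∈ D, lamM xb (r k) C = (L k : EReal))
    (hLpos : ∀ k ∈ D, 0 < L k)
    {c : ι → ℝ} (hp : xb + ∑ k, c k • r k ∈ GDCset xb r C D) :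
    ∃ a e W : ι → ℝ,
      (∀ k, 0 ≤ a k) ∧ (∀ k, 0 ≤ e k) ∧ (∀ k, 0 ≤ W k) ∧ (∑ k, W k) = 1 ∧
      (∀ k, k ∉ D → W k = 0) ∧ (∀ k, k ∉ D → a k = 0) ∧
      (∀ k, W k * L k ≤ a k) ∧ (∀ k, a k = W k * L k → W k = 0) ∧
      (∀ k, c k = a k + e k) ∧ (∑ k, e k • r k) ∈ recc C := by
  classical
  have hp' : xb + ∑ k, c k • r k ∈ GDset xb r C D + recc C := hp
  rw [Set.mem_add] at hp'
  obtain ⟨x, hx, y, hyC, hxy⟩ := hp'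
  have hx' : x ∈ {xb} + convexHull ℝ (⋃ j ∈ (D : Set ι),
      {y : Fin n → ℝ | ∃ l : ℝ, lamM xb (r j) C < (l : EReal) ∧ y = l • r j}) := hx
  rw [Set.mem_add] at hx'
  obtain ⟨u, hu, h, hh, hux⟩ := hx'
  rw [Set.mem_singleton_iff] at hu
  rw [hu] at hux
  clear hu
  obtain ⟨e, he0, hey⟩ := hrecc hyC
  rw [convexHull_eq] at hh
  obtain ⟨κ, t, w, zf, hw0, hw1, hzQ, hcm⟩ := hh
  have htne : t.Nonempty := Finset.nonempty_of_sum_ne_zero (by rw [hw1]; norm_num)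
  have hex : ∀ m ∈ t, ∃ k, k ∈ D ∧ ∃ l : ℝ, lamM xb (r k) C < (l : EReal) ∧ zf m = l • r k := by
    intro m hm
    have := hzQ m hm
    simpa [Set.mem_iUnion] using this
  obtain ⟨m₀, hm₀⟩ := htne
  obtain ⟨k₀, hk₀, -⟩ := hex m₀ hm₀
  have hex' : ∀ m : κ, ∃ kl : ι × ℝ, m ∈ t →
      (kl.1 ∈ D ∧ lamM xb (r kl.1) C < (kl.2 : EReal) ∧ zf m = kl.2 • r kl.1) := by
    intro m
    by_cases hm : m ∈ t
    · obtain ⟨k, hk, l, hl, hz⟩ := hex m hm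
      exact ⟨(k, l), fun _ => ⟨hk, hl, hz⟩⟩
    · exact ⟨(k₀, 0), fun h => absurd h hm⟩
  choose kl hkl using hex'
  have hkD : ∀ m ∈ t, (kl m).1 ∈ D := fun m hm => (hkl m hm).1
  have hlt : ∀ m ∈ t, L (kl m).1 < (kl m).2 := by
    intro m hm
    have h1 := (hkl m hm).2.1
    rw [hL _ (hkD m hm)] at h1
    exact_mod_cast h1
  have hlpos : ∀ m ∈ t, 0 < (kl m).2 := fun m hm =>
    lt_trans (hLpos _ (hkD m hm)) (hlt m hm)
  have ha0 : ∀ k : ι, 0 ≤ ∑ m ∈ t.filter (fun m => (kl m).1 = k), w m * (kl m).2 := by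
    intro k
    refine Finset.sum_nonneg fun m hm => ?_
    have hmt := (Finset.mem_filter.1 hm).1
    exact mul_nonneg (hw0 m hmt) (hlpos m hmt).le
  have hW0 : ∀ k : ι, 0 ≤ ∑ m ∈ t.filter (fun m => (kl m).1 = k), w m := fun k =>
    Finset.sum_nonneg fun m hm => hw0 m (Finset.mem_filter.1 hm).1
  have hW1 : (∑ k, ∑ m ∈ t.filter (fun m => (kl m).1 = k), w m) = 1 := by
    rw [← hw1]
    exact Finset.sum_fiberwise_of_maps_to (fun m _ => Finset.mem_univ ((kl m).1)) w
  have hWD : ∀ k, k ∉ D → (∑ m ∈ t.filter (fun m => (kl m).1 = k), w m) = 0 := by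
    intro k hk
    refine Finset.sum_eq_zero fun m hm => ?_
    obtain ⟨hmt, hmk⟩ := Finset.mem_filter.1 hm
    exact absurd (hmk ▸ hkD m hmt) hk
  have haD : ∀ k, k ∉ D →
      (∑ m ∈ t.filter (fun m => (kl m).1 = k), w m * (kl m).2) = 0 := by
    intro k hk
    refine Finset.sum_eq_zero fun m hm => ?_
    obtain ⟨hmt, hmk⟩ := Finset.mem_filter.1 hm
    exact absurd (hmk ▸ hkD m hmt) hk
  have hWL : ∀ k : ι, (∑ m ∈ t.filter (fun m => (kl m).1 = k), w m) * L k ≤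
      ∑ m ∈ t.filter (fun m => (kl m).1 = k), w m * (kl m).2 := by
    intro k
    rw [Finset.sum_mul]
    refine Finset.sum_le_sum fun m hm => ?_
    obtain ⟨hmt, hmk⟩ := Finset.mem_filter.1 hm
    have h2 := hlt m hmt
    rw [hmk] at h2
    exact mul_le_mul_of_nonneg_left h2.le (hw0 m hmt)
  have hstrict : ∀ k : ι,
      (∑ m ∈ t.filter (fun m => (kl m).1 = k), w m * (kl m).2)
        = (∑ m ∈ t.filter (fun m => (kl m).1 = k), w m) * L k →
      (∑ m ∈ t.filter (fun m => (kl m).1 = k), w m) = 0 := by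
    intro k hak
    have hzero : ∑ m ∈ t.filter (fun m => (kl m).1 = k), w m * ((kl m).2 - L k) = 0 := by
      have heq2 : ∑ m ∈ t.filter (fun m => (kl m).1 = k), w m * ((kl m).2 - L k)
          = (∑ m ∈ t.filter (fun m => (kl m).1 = k), w m * (kl m).2)
            - (∑ m ∈ t.filter (fun m => (kl m).1 = k), w m) * L k := by
        rw [Finset.sum_mul, ← Finset.sum_sub_distrib]
        exact Finset.sum_congr rfl fun m _ => by ring
      rw [heq2, hak]; ring
    have hnn : ∀ m ∈ t.filter (fun m => (kl m).1 = k), 0 ≤ w m * ((kl m).2 - L k) := by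
      intro m hm
      obtain ⟨hmt, hmk⟩ := Finset.mem_filter.1 hm
      have h2 := hlt m hmt
      rw [hmk] at h2
      exact mul_nonneg (hw0 m hmt) (by linarith)
    have hall := (Finset.sum_eq_zero_iff_of_nonneg hnn).1 hzero
    refine Finset.sum_eq_zero fun m hm => ?_
    obtain ⟨hmt, hmk⟩ := Finset.mem_filter.1 hm
    have h1 := hall m hm
    have h2 := hlt m hmt
    rw [hmk] at h2
    rcases mul_eq_zero.1 h1 with h' | h'
    · exact h'
    · linarith
  have hhy : h + y = ∑ k, c k • r k := by
    apply add_left_cancel (a := xb)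
    rw [← add_assoc, hux, hxy]
  have hsum : ∑ k, c k • r k
      = ∑ k, ((∑ m ∈ t.filter (fun m => (kl m).1 = k), w m * (kl m).2) + e k) • r k := by
    rw [← hhy]
    have hcm' : h = ∑ m ∈ t, w m • zf m := by
      rw [← hcm, Finset.centerMass_eq_of_sum_1 _ _ hw1]
    have hterm : ∀ m ∈ t, w m • zf m = (w m * (kl m).2) • r ((kl m).1) := by
      intro m hm
      rw [(hkl m hm).2.2, smul_smul]
    have hfib : ∑ m ∈ t, (w m * (kl m).2) • r ((kl m).1)
        = ∑ k, (∑ m ∈ t.filter (fun m => (kl m).1 = k), w m * (kl m).2) • r k := by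
      rw [← Finset.sum_fiberwise_of_maps_to (fun m _ => Finset.mem_univ ((kl m).1))
        (fun m => (w m * (kl m).2) • r ((kl m).1))]
      refine Finset.sum_congr rfl fun k _ => ?_
      rw [Finset.sum_smul]
      refine Finset.sum_congr rfl fun m hm => ?_
      rw [(Finset.mem_filter.1 hm).2]
    rw [hcm', Finset.sum_congr rfl hterm, hfib, hey, ← Finset.sum_add_distrib]
    exact Finset.sum_congr rfl fun k _ => (add_smul _ _ _).symm
  have hcoord : ∀ k, c k
      = (∑ m ∈ t.filter (fun m => (kl m).1 = k), w m * (kl m).2) + e k := by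
    intro k
    have hz : ∑ k, (c k - ((∑ m ∈ t.filter (fun m => (kl m).1 = k), w m * (kl m).2) + e k)) • r k = 0 := by
      simp only [sub_smul, Finset.sum_sub_distrib]
      rw [hsum, sub_self]
    have := Fintype.linearIndependent_iff.1 hr _ hz k
    linarith [this]
  exact ⟨_, e, _, ha0, he0, hW0, hW1, hWD, haD, hWL, hstrict, hcoord, by rw [← hey]; exact hyC⟩

/-- Points whose `D`-coordinates vanish are not in `G_D^C`. -/
lemma claimB (hr : LinearIndependent ℝ r) (hrecc : recc C ⊆ reccPBset r)
    (L : ι → ℝ) (hL : ∀ k ∈ D, lamM xb (r k) C = (L k : EReal))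
    (hLpos : ∀ k ∈ D, 0 < L k)
    {c : ι → ℝ} (hc0 : ∀ k, 0 ≤ c k) (hcD : ∀ k ∈ D, c k = 0) :
    xb + ∑ k, c k • r k ∉ GDCset xb r C D := by
  intro hp
  obtain ⟨a, e, W, ha0, he0, hW0, hW1, hWD, haD, hWL, -, hce, -⟩ :=
    master hr hrecc L hL hLpos hp
  have hWz : ∀ k, W k = 0 := by
    intro k
    by_cases hkD : k ∈ D
    · have hak : a k = 0 := by
        have h1 := hce k
        rw [hcD k hkD] at h1
        linarith [ha0 k, he0 k]
      nlinarith [hWL k, hLpos k hkD, hW0 k]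
    · exact hWD k hkD
  rw [Finset.sum_eq_zero (fun k _ => hWz k)] at hW1
  norm_num at hW1

/-- Points `x̄ + (t λ⁻_i) r^i + (t g) r^j` with `i ∈ D`, `j ∉ D`, `γ_{ij} ≤ 0`,
`t ≥ 0`, `g > 0` are not in `G_D^C`. -/
lemma claimA (hr : LinearIndependent ℝ r) (hrecc : recc C ⊆ reccPBset r)
    (L : ι → ℝ) (hL : ∀ k ∈ D, lamM xb (r k) C = (L k : EReal))
    (hLpos : ∀ k ∈ D, 0 < L k)
    (hLdef : ∀ k, L k = (lamM xb (r k) C).toReal)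
    {i j : ι} (hi : i ∈ D) (hj : j ∉ D) (hgam : gam xb r C D i j ≤ 0)
    {t g : ℝ} (ht : 0 ≤ t) (hg : 0 < g) :
    xb + ∑ k, (if k = i then t * L i else if k = j then t * g else 0) • r k
      ∉ GDCset xb r C D := by
  intro hp
  obtain ⟨a, e, W, ha0, he0, hW0, hW1, hWD, haD, hWL, hstrict, hce, hrecC⟩ :=
    master hr hrecc L hL hLpos hp
  have hij : i ≠ j := fun h => hj (h ▸ hi)
  have hLipos : 0 < L i := hLpos i hi
  have haoff : ∀ k, k ≠ i → a k = 0 := by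
    intro k hk
    by_cases hkD : k ∈ D
    · have hkj : k ≠ j := fun h => hj (h ▸ hkD)
      have hc : (0:ℝ) = a k + e k := by
        have h1 := hce k
        rwa [if_neg hk, if_neg hkj] at h1
      linarith [ha0 k, he0 k]
    · exact haD k hkD
  have hWoff : ∀ k, k ≠ i → W k = 0 := by
    intro k hk
    by_cases hkD : k ∈ D
    · nlinarith [hWL k, hLpos k hkD, hW0 k, haoff k hk, (hLpos k hkD).le]
    · exact hWD k hkD
  have hWi : W i = 1 := by
    rw [Finset.sum_eq_single i (fun k _ hk => hWoff k hk)
      (fun h => absurd (Finset.mem_univ i) h)] at hW1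
    exact hW1
  have hai : L i < a i := by
    have h1 : W i * L i ≤ a i := hWL i
    rw [hWi, one_mul] at h1
    rcases h1.lt_or_eq with h' | h'
    · exact h'
    · exfalso
      have := hstrict i (by rw [hWi, one_mul, h'])
      rw [hWi] at this; norm_num at this
  have hci : t * L i = a i + e i := by
    have h1 := hce i
    rwa [if_pos rfl] at h1
  have ht1 : 1 < t := by nlinarith [he0 i, hai, hLipos]
  have htpos : 0 < t := lt_trans one_pos ht1
  have hcj : t * g = a j + e j := by
    have h1 := hce j
    rwa [if_neg (Ne.symm hij), if_pos rfl] at h1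
  have hej : e j = t * g := by
    have := haD j hj
    linarith [hcj]
  have hei : e i = t * L i - a i := by linarith [hci]
  have heoff : ∀ k, k ≠ i → k ≠ j → e k = 0 := by
    intro k hki hkj
    have h1 := hce k
    rw [if_neg hki, if_neg hkj] at h1
    linarith [haoff k hki]
  have hvrec : ∑ k, e k • r k = e i • r i + e j • r j := by
    refine Eq.trans ?_ (Finset.sum_pair (f := fun k => e k • r k) hij)
    refine (Finset.sum_subset (Finset.subset_univ _) ?_).symm
    intro k _ hk
    simp only [Finset.mem_insert, Finset.mem_singleton] at hk
    push_neg at hk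
    rw [heoff k hk.1 hk.2, zero_smul]
  have hv : (1/t) • (∑ k, e k • r k) + (a i / t) • r i
      = (lamM xb (r i) C).toReal • r i + g • r j := by
    rw [hvrec, hei, hej, ← hLdef i]
    rw [smul_add, smul_smul, smul_smul,
      show (1/t) * (t * L i - a i) = L i - a i / t by field_simp,
      show (1/t) * (t * g) = g by field_simp]
    rw [sub_smul]
    abel
  have hvrecc : (lamM xb (r i) C).toReal • r i + g • r j ∈ recc (GDCset xb r C D) := by
    rw [← hv]
    refine recc_add (recc_smul ?_ (div_nonneg zero_le_one htpos.le))
      (recc_smul ?_ (div_nonneg (ha0 i) htpos.le))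
    · exact recc_add_recc hrecC
    · exact recc_add_left (ri_recc_GD L hL hLpos hi)
  have hle : (g : EReal) ≤ gam xb r C D i j := le_sSup ⟨g, ⟨hg.le, hvrecc⟩, rfl⟩
  exact absurd hgam (not_le.2 (lt_of_lt_of_le (EReal.coe_pos.2 hg) hle))

lemma convex_PBset (xb : Fin n → ℝ) (r : ι → Fin n → ℝ) : Convex ℝ (PBset xb r) := by
  rintro p ⟨cp, hcp, rfl⟩ q ⟨cq, hcq, rfl⟩ s u hs hu hsu
  refine ⟨fun k => s * cp k + u * cq k,
    fun k => add_nonneg (mul_nonneg hs (hcp k)) (mul_nonneg hu (hcq k)), ?_⟩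
  have hxb : s • xb + u • xb = xb := by rw [← add_smul, hsu, one_smul]
  rw [smul_add, smul_add, Finset.smul_sum, Finset.smul_sum]
  rw [show ∀ A B E F : Fin n → ℝ, (A + B) + (E + F) = (A + E) + (B + F) from
    fun A B E F => by abel]
  rw [hxb, ← Finset.sum_add_distrib]
  congr 1
  refine Finset.sum_congr rfl fun k _ => ?_
  rw [smul_smul, smul_smul, ← add_smul]

lemma isClosed_PBset (xb : Fin n → ℝ) (r : ι → Fin n → ℝ) (hr : LinearIndependent ℝ r) :
    IsClosed (PBset xb r) := by
  classical
  let f : (ι → ℝ) →ₗ[ℝ] (Fin n → ℝ) :=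
    { toFun := fun c => ∑ k, c k • r k
      map_add' := fun c d => by
        simp [add_smul, Finset.sum_add_distrib]
      map_smul' := fun s c => by
        simp [Finset.smul_sum, smul_smul] }
  have hker : LinearMap.ker f = ⊥ := by
    rw [LinearMap.ker_eq_bot']
    intro c hc
    have := Fintype.linearIndependent_iff.1 hr c hc
    funext k
    exact this k
  have hce := LinearMap.isClosedEmbedding_of_injective hker
  have hK : IsClosed {c : ι → ℝ | ∀ j, 0 ≤ c j} := by
    have heq : {c : ι → ℝ | ∀ j, 0 ≤ c j} = ⋂ j, {c : ι → ℝ | 0 ≤ c j} := by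
      ext; simp [Set.mem_iInter]
    rw [heq]
    exact isClosed_iInter fun j => isClosed_le continuous_const (continuous_apply j)
  have himg : IsClosed (⇑f '' {c : ι → ℝ | ∀ j, 0 ≤ c j}) := hce.isClosedMap _ hK
  have hset : PBset xb r = (fun y => xb + y) '' (⇑f '' {c : ι → ℝ | ∀ j, 0 ≤ c j}) := by
    ext p
    simp only [PBset, Set.mem_image, Set.mem_setOf_eq]
    constructor
    · rintro ⟨c, hc, rfl⟩
      exact ⟨f c, ⟨c, hc, rfl⟩, rfl⟩
    · rintro ⟨y, ⟨c, hc, rfl⟩, rfl⟩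
      exact ⟨c, hc, rfl⟩
  rw [hset]
  exact (Homeomorph.addLeft xb).isClosedMap _ himg

lemma two_term_sum {i j : ι} (hij : i ≠ j) (x y : ℝ) (r : ι → Fin n → ℝ) :
    ∑ k, (if k = i then x else if k = j then y else 0) • r k = x • r i + y • r j := by
  classical
  have hterm : ∀ k : ι, (if k = i then x else if k = j then y else 0) • r k
      = (if k = i then x • r i else 0) + (if k = j then y • r j else 0) := by
    intro k
    by_cases h1 : k = i
    · subst h1; simp [hij]
    · by_cases h2 : k = j
      · subst h2; simp [h1]
      · simp [h1, h2]
  rw [Finset.sum_congr rfl fun k _ => hterm k, Finset.sum_add_distrib,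
    Finset.sum_ite_eq' Finset.univ i (fun _ => x • r i),
    Finset.sum_ite_eq' Finset.univ j (fun _ => y • r j)]
  simp

lemma one_term_sum (i : ι) (x : ℝ) (r : ι → Fin n → ℝ) :
    ∑ k, (if k = i then x else 0) • r k = x • r i := by
  classical
  have hterm : ∀ k : ι, (if k = i then x else 0) • r k
      = (if k = i then x • r i else 0) := by
    intro k
    by_cases h1 : k = i
    · subst h1; simp
    · simp [h1]
  rw [Finset.sum_congr rfl fun k _ => hterm k,
    Finset.sum_ite_eq' Finset.univ i (fun _ => x • r i)]
  simp

end Aux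

/-- Proposition 5. If `M = ∅`, then `cl conv(P^B ∖ G_D^C) = P^B`. -/
theorem stmt9 (xb : Fin n → ℝ) (r : ι → Fin n → ℝ) (hr : LinearIndependent ℝ r)
    (C : Set (Fin n → ℝ)) (hCopen : IsOpen C) (hCconv : Convex ℝ C)
    (hxb : xb ∉ closure C) (hrecc : recc C ⊆ reccPBset r)
    (D : Finset ι) (hD : (D : Set ι) ⊆ N1set xb r C ∪ N2set xb r C)
    (hM : Mset xb r C D = ∅) :
    closure (convexHull ℝ (PBset xb r \ GDCset xb r C D)) = PBset xb r := by
  classical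
  set L : ι → ℝ := fun k => (lamM xb (r k) C).toReal with hLdef
  have hDfin : ∀ k ∈ D, 0 < lamM xb (r k) C ∧ lamM xb (r k) C < ⊤ := by
    intro k hk
    rcases hD hk with h | h
    · exact ⟨h.1, h.2.1⟩
    · exact ⟨h.1, h.2.1⟩
  have hL : ∀ k ∈ D, lamM xb (r k) C = (L k : EReal) := by
    intro k hk
    exact (EReal.coe_toReal (hDfin k hk).2.ne (ne_bot_of_gt (hDfin k hk).1)).symm
  have hLpos : ∀ k ∈ D, 0 < L k := by
    intro k hk
    have h1 := (hDfin k hk).1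
    rw [hL k hk] at h1
    exact_mod_cast h1
  have hLdef' : ∀ k, L k = (lamM xb (r k) C).toReal := fun k => rfl
  apply subset_antisymm
  · exact closure_minimal (convexHull_min Set.diff_subset (convex_PBset xb r))
      (isClosed_PBset xb r hr)
  rintro p ⟨c, hc0, rfl⟩
  have hchoice : ∀ i : ι, ∃ j : ι, i ∈ D → (j ∉ D ∧ gam xb r C D i j ≤ 0) := by
    intro i
    by_cases hiD : i ∈ D
    · have hnm : i ∉ Mset xb r C D := by rw [hM]; exact Set.notMem_empty i
      have : ¬ (i ∈ D ∧ ∀ j, j ∉ D → 0 < gam xb r C D i j) := hnm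
      push_neg at this
      obtain ⟨j, hj1, hj2⟩ := this hiD
      exact ⟨j, fun _ => ⟨hj1, hj2⟩⟩
    · exact ⟨i, fun h => absurd h hiD⟩
  choose jf hjf using hchoice
  set Mc : ℝ := (Fintype.card ι : ℝ) + 1 with hMc
  have hMpos : 0 < Mc := by positivity
  set d : ι → ℝ := fun k => if k ∈ D then c k / L k else 0 with hd
  set v : Fin n → ℝ := ∑ k, d k • r (jf k) with hv
  have key : ∀ g : ℝ, 0 < g → xb + ∑ k, c k • r k + g • v
      ∈ convexHull ℝ (PBset xb r \ GDCset xb r C D) := by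
    intro g hg
    set z : Option ι → Fin n → ℝ := fun o => Option.elim o xb
      (fun k => xb + (Mc * c k) • r k + (Mc * g * d k) • r (jf k)) with hz
    have hznone : z none = xb := by simp [hz]
    have hzsome : ∀ k, z (some k) = xb + (Mc * c k) • r k + (Mc * g * d k) • r (jf k) :=
      fun k => by simp only [hz, Option.elim]
    have hzmem : ∀ o : Option ι, z o ∈ PBset xb r \ GDCset xb r C D := by
      intro o
      match o with
      | none =>
        constructor
        · exact ⟨fun _ => 0, fun _ => le_refl 0, by rw [hznone]; simp⟩
        · have hB := claimB hr hrecc L hL hLpos (c := fun _ => (0:ℝ))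
            (fun _ => le_refl 0) (fun k _ => rfl)
          rw [hznone]
          intro hmem
          apply hB
          simpa using hmem
      | some k =>
        by_cases hkD : k ∈ D
        · have hjk := hjf k hkD
          have hne : k ≠ jf k := fun h => hjk.1 (h ▸ hkD)
          have hLk : 0 < L k := hLpos k hkD
          have h1 : (Mc * c k / L k) * L k = Mc * c k := div_mul_cancel₀ _ hLk.ne'
          have h2 : (Mc * c k / L k) * g = Mc * g * d k := by
            rw [hd]; simp only [if_pos hkD]; ring
          have hzeq : z (some k) = xb + ∑ k', (if k' = k then (Mc * c k / L k) * L k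
              else if k' = jf k then (Mc * c k / L k) * g else 0) • r k' := by
            rw [hzsome k, two_term_sum hne, h1, h2, add_assoc]
          rw [hzeq]
          constructor
          · refine ⟨fun k' => if k' = k then (Mc * c k / L k) * L k
              else if k' = jf k then (Mc * c k / L k) * g else 0, fun k' => ?_, rfl⟩
            have hT : 0 ≤ Mc * c k / L k :=
              div_nonneg (mul_nonneg hMpos.le (hc0 k)) hLk.le
            dsimp only
            split_ifs
            · exact mul_nonneg hT hLk.le
            · exact mul_nonneg hT hg.le
            · exact le_refl 0
          · exact claimA hr hrecc L hL hLpos hLdef' hkD hjk.1 hjk.2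
              (div_nonneg (mul_nonneg hMpos.le (hc0 k)) hLk.le) hg
        · have hzeq : z (some k) = xb + ∑ k', (if k' = k then Mc * c k else 0) • r k' := by
            rw [one_term_sum k (Mc * c k) r]
            show xb + (Mc * c k) • r k + (Mc * g * d k) • r (jf k) = _
            rw [hd]; simp only [if_neg hkD, mul_zero, zero_smul, add_zero]
          rw [hzeq]
          constructor
          · refine ⟨fun k' => if k' = k then Mc * c k else 0, fun k' => ?_, rfl⟩
            try dsimp only
            split_ifs
            · exact mul_nonneg hMpos.le (hc0 k)
            · exact le_refl 0
          · refine claimB hr hrecc L hL hLpos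
              (c := fun k' => if k' = k then Mc * c k else 0) ?_ ?_
            · intro k'
              by_cases hkk : k' = k
              · simp only [if_pos hkk]; exact mul_nonneg hMpos.le (hc0 k)
              · simp only [if_neg hkk]; exact le_refl 0
            · intro k' hk'
              have : k' ≠ k := fun h => hkD (h ▸ hk')
              simp only [if_neg this]
    have hwsum : ∑ _o : Option ι, (1/Mc : ℝ) = 1 := by
      have hne : ((Fintype.card ι : ℝ) + 1) ≠ 0 := by positivity
      rw [Finset.sum_const, Finset.card_univ, Fintype.card_option, nsmul_eq_mul]
      rw [hMc]
      push_cast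
      field_simp
      try ring
    have hmem := Finset.centerMass_mem_convexHull (Finset.univ : Finset (Option ι))
      (w := fun _ => 1/Mc) (fun o _ => by positivity) (by rw [hwsum]; norm_num)
      (fun o _ => hzmem o)
    rw [Finset.centerMass_eq_of_sum_1 _ z hwsum] at hmem
    have hterm : ∀ k : ι, (1/Mc : ℝ) • z (some k)
        = (1/Mc) • xb + c k • r k + (g * d k) • r (jf k) := by
      intro k
      have e1 : (1/Mc) * (Mc * c k) = c k := by field_simp
      have e2 : (1/Mc) * (Mc * g * d k) = g * d k := by field_simp
      rw [hzsome k, smul_add, smul_add, smul_smul, smul_smul, e1, e2]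
    have hxbsum : (1/Mc : ℝ) • xb + (Fintype.card ι) • ((1/Mc : ℝ) • xb) = xb := by
      rw [← Nat.cast_smul_eq_nsmul ℝ, smul_smul, ← add_smul]
      have : (1/Mc : ℝ) + (Fintype.card ι : ℝ) * (1/Mc) = 1 := by
        have hne : ((Fintype.card ι : ℝ) + 1) ≠ 0 := by positivity
        rw [hMc]
        field_simp
        try ring
      rw [this, one_smul]
    have hvsum : ∑ k, (g * d k) • r (jf k) = g • v := by
      rw [hv, Finset.smul_sum]
      exact Finset.sum_congr rfl fun k _ => by rw [smul_smul]
    have hsum2 : ∑ o : Option ι, (1/Mc : ℝ) • z o = xb + ∑ k, c k • r k + g • v := by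
      rw [Fintype.sum_option]
      rw [Finset.sum_congr rfl fun k _ => hterm k]
      rw [Finset.sum_add_distrib, Finset.sum_add_distrib, Finset.sum_const,
        Finset.card_univ]
      rw [hznone, hvsum]
      conv_rhs => rw [← hxbsum]
      abel
    rwa [hsum2] at hmem
  have hcont : Filter.Tendsto (fun g : ℝ => xb + ∑ k, c k • r k + g • v)
      (nhdsWithin 0 (Set.Ioi 0)) (nhds (xb + ∑ k, c k • r k)) := by
    have h1 : Continuous (fun g : ℝ => xb + ∑ k, c k • r k + g • v) := by
      apply Continuous.add continuous_const
      exact continuous_id.smul continuous_const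
    have h2 : Filter.Tendsto (fun g : ℝ => xb + ∑ k, c k • r k + g • v)
        (nhds 0) (nhds (xb + ∑ k, c k • r k)) := by
      have h3 := h1.tendsto 0
      simpa using h3
    exact h2.mono_left nhdsWithin_le_nhds
  exact mem_closure_of_tendsto hcont
    (eventually_mem_nhdsWithin.mono fun g hg => key g hg)
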